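/- Let γ = (−1+√5)/2 (so γ² + γ − 1 = 0) and consider the eleven lines of ℋ_γ in ℙ²(ℂ). Every permutation φ of the set of these eleven lines with the property that any three distinct lines of ℋ_γ have a common point if and only if their φ-images have a common point, is the identity permutation. (The same holds for γ = (−1−√5)/2; i.e., the automorphism group of the combinatorics ℋ is trivial.) -/
import Mathlib


open scoped LinearAlgebra.Projectivization
open scoped Matrix

/-- The complex projective plane `ℙ²(ℂ)`, the projectivization of `ℂ³`. -/
abbrev Pt := ℙ ℂ (Fin 3 → ℂ)

/-- The projective line `{[x:y:z] | a·x + b·y + c·z = 0}` in `ℙ²(ℂ)` determined by the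
linear form with coefficients `(a, b, c)`.  (Vanishing of a linear form is independent
of the choice of homogeneous coordinates, so testing it on `p.rep` is equivalent to
testing it on any representative.) -/
def pline (a b c : ℂ) : Set Pt :=
  {p | a * p.rep 0 + b * p.rep 1 + c * p.rep 2 = 0}

/-- The lines `M₁,…,M₅` of the arrangement `𝒞_γ` (0-based: `Mline γ i = M_{i+1}`):
`M₁: z=0`, `M₂: x=0`, `M₃: x=z`, `M₄: x=−(γ+1)z`, `M₅: x=(γ+2)z`. -/
noncomputable def Mline (γ : ℝ) : Fin 5 → Set Pt :=
  ![pline 0 0 1, pline 1 0 0, pline 1 0 (-1),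
    pline 1 0 ((γ : ℂ) + 1), pline 1 0 (-((γ : ℂ) + 2))]

/-- The lines `L₁,…,L₅` of the arrangement `𝒞_γ` (0-based: `Lline γ i = L_{i+1}`):
`L₁: y=x`, `L₂: y=γ(x−z)`, `L₃: y=γx+1`, `L₄: y=z`, `L₅: y=0`. -/
noncomputable def Lline (γ : ℝ) : Fin 5 → Set Pt :=
  ![pline 1 (-1) 0, pline (γ : ℂ) (-1) (-(γ : ℂ)), pline (γ : ℂ) (-1) 1,
    pline 0 1 (-1), pline 0 1 0]

/-- The extra line `N_γ : γx + (γ+1)y + z = 0` of the arrangement `ℋ_γ = 𝒞_γ ∪ {N_γ}`. -/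
noncomputable def Nline (γ : ℝ) : Set Pt := pline (γ : ℂ) ((γ : ℂ) + 1) 1

/-- Index type for the eleven lines of `ℋ_γ`: `some (Sum.inl i) = L_{i+1}`,
`some (Sum.inr i) = M_{i+1}`, `none = N_γ`. -/
abbrev HIdx := Option (Fin 5 ⊕ Fin 5)

/-- The eleven lines of the arrangement `ℋ_γ = 𝒞_γ ∪ {N_γ}`. -/
noncomputable def Hline (γ : ℝ) : HIdx → Set Pt :=
  fun a => Option.elim a (Nline γ) (Sum.elim (Lline γ) (Mline γ))

-- ### auxiliary algebra: the ring ℤ[γ] with γ² = 1 − γ, encoded as pairs (p,q) ↦ p + qγ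
abbrev G2 := ℤ × ℤ

def gadd (x y : G2) : G2 := (x.1 + y.1, x.2 + y.2)
def gsub (x y : G2) : G2 := (x.1 - y.1, x.2 - y.2)
def gmul (x y : G2) : G2 := (x.1 * y.1 + x.2 * y.2, x.1 * y.2 + x.2 * y.1 - x.2 * y.2)

abbrev T3 := G2 × G2 × G2

def detG (r0 r1 r2 : T3) : G2 :=
  gsub (gadd (gmul r0.1 (gsub (gmul r1.2.1 r2.2.2) (gmul r1.2.2 r2.2.1)))
             (gmul r0.2.2 (gsub (gmul r1.1 r2.2.1) (gmul r1.2.1 r2.1))))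
       (gmul r0.2.1 (gsub (gmul r1.1 r2.2.2) (gmul r1.2.2 r2.1)))

/-- coefficient triples of the eleven lines, with entries in ℤ[γ]. -/
def coeffs : HIdx → T3
  | none => ((0,1), (1,1), (1,0))
  | some (.inl 0) => ((1,0), (-1,0), (0,0))
  | some (.inl 1) => ((0,1), (-1,0), (0,-1))
  | some (.inl 2) => ((0,1), (-1,0), (1,0))
  | some (.inl 3) => ((0,0), (1,0), (-1,0))
  | some (.inl 4) => ((0,0), (1,0), (0,0))
  | some (.inr 0) => ((0,0), (0,0), (1,0))
  | some (.inr 1) => ((1,0), (0,0), (0,0))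
  | some (.inr 2) => ((1,0), (0,0), (-1,0))
  | some (.inr 3) => ((1,0), (0,0), (1,1))
  | some (.inr 4) => ((1,0), (0,0), (-2,-1))

noncomputable def ev (γ : ℝ) (x : G2) : ℂ := (x.1 : ℂ) + (x.2 : ℂ) * (γ : ℝ)

lemma ev_add (γ : ℝ) (x y : G2) : ev γ (gadd x y) = ev γ x + ev γ y := by
  simp [ev, gadd]; push_cast; ring

lemma ev_sub (γ : ℝ) (x y : G2) : ev γ (gsub x y) = ev γ x - ev γ y := by
  simp [ev, gsub]; push_cast; ring

lemma ev_mul {γ : ℝ} (hγ : ((γ:ℂ)) ^ 2 + (γ:ℂ) - 1 = 0) (x y : G2) :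
    ev γ (gmul x y) = ev γ x * ev γ y := by
  simp only [ev, gmul]
  push_cast
  linear_combination (-(x.2:ℂ) * (y.2:ℂ)) * hγ

noncomputable def plineT (γ : ℝ) (t : T3) : Set Pt := pline (ev γ t.1) (ev γ t.2.1) (ev γ t.2.2)

lemma Hline_eq (γ : ℝ) (a : HIdx) : Hline γ a = plineT γ (coeffs a) := by
  rcases a with _ | (i | i)
  · simp [Hline, Nline, plineT, coeffs, ev]; ring_nf
  · fin_cases i <;> simp [Hline, Lline, plineT, coeffs, ev] <;> norm_num
  · fin_cases i <;> simp [Hline, Mline, plineT, coeffs, ev] <;> norm_num <;> ring_nf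

noncomputable def matC (γ : ℝ) (ta tb tc : T3) : Matrix (Fin 3) (Fin 3) ℂ :=
  Matrix.of ![![ev γ ta.1, ev γ ta.2.1, ev γ ta.2.2],
              ![ev γ tb.1, ev γ tb.2.1, ev γ tb.2.2],
              ![ev γ tc.1, ev γ tc.2.1, ev γ tc.2.2]]

lemma det_matC {γ : ℝ} (hγ : ((γ:ℂ)) ^ 2 + (γ:ℂ) - 1 = 0) (ta tb tc : T3) :
    (matC γ ta tb tc).det = ev γ (detG ta tb tc) := by
  rw [Matrix.det_fin_three]
  simp only [detG, ev_add, ev_sub, ev_mul hγ, matC, Matrix.of_apply, Matrix.cons_val',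
    Matrix.cons_val_zero, Matrix.cons_val_one, Matrix.head_cons, Matrix.empty_val',
    Matrix.cons_val_fin_one, Matrix.head_fin_const, Matrix.cons_val_two, Matrix.tail_cons]
  ring

lemma mem_plineT (γ : ℝ) (t : T3) (v : Fin 3 → ℂ) (hv : v ≠ 0) :
    Projectivization.mk ℂ v hv ∈ plineT γ t ↔
      ev γ t.1 * v 0 + ev γ t.2.1 * v 1 + ev γ t.2.2 * v 2 = 0 := by
  obtain ⟨u, hu⟩ := Projectivization.exists_smul_eq_mk_rep ℂ v hv
  have hrep : ∀ i, (Projectivization.mk ℂ v hv).rep i = (u : ℂ) * v i := by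
    intro i; rw [← hu]; simp [Units.smul_def]
  have hne : (u : ℂ) ≠ 0 := Units.ne_zero u
  constructor
  · intro h
    have h' : (u : ℂ) * (ev γ t.1 * v 0 + ev γ t.2.1 * v 1 + ev γ t.2.2 * v 2) = 0 := by
      have := h
      simp only [plineT, pline, Set.mem_setOf_eq, hrep] at this
      linear_combination this
    exact (mul_eq_zero.mp h').resolve_left hne
  · intro h
    simp only [plineT, pline, Set.mem_setOf_eq, hrep]
    linear_combination (u : ℂ) * h

lemma ev_eq_zero_iff_aux {γ : ℝ} (hγ : γ ^ 2 + γ - 1 = 0) (A B : ℤ)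
    (h : (A : ℝ) + (B : ℝ) * γ = 0) : A = 0 ∧ B = 0 := by
  by_cases hB : B = 0
  · subst hB
    simp at h
    exact ⟨by exact_mod_cast h, rfl⟩
  · exfalso
    have hBr : (B : ℝ) ≠ 0 := Int.cast_ne_zero.mpr hB
    have hγv : γ = -(A : ℝ) / (B : ℝ) := by field_simp; linarith
    have h5 : Irrational (Real.sqrt 5) := by
      have := Nat.Prime.irrational_sqrt (p := 5) (by norm_num)
      simpa using this
    have hsq : (2 * γ + 1) ^ 2 = 5 := by linear_combination 4 * hγ
    have hs : Real.sqrt 5 = |2 * γ + 1| := by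
      rw [← hsq, Real.sqrt_sq_eq_abs]
    set q : ℚ := |2 * (-(A : ℚ) / (B : ℚ)) + 1| with hq
    have hBq : (B : ℚ) ≠ 0 := Int.cast_ne_zero.mpr hB
    have hcast : (q : ℝ) = |2 * γ + 1| := by
      rw [hγv, hq]
      push_cast
      ring_nf
    exact h5 ⟨q, by rw [hcast, hs]⟩

lemma ev_eq_zero_iff {γ : ℝ} (hγ : γ ^ 2 + γ - 1 = 0) (x : G2) :
    ev γ x = 0 ↔ x = (0, 0) := by
  constructor
  · intro h
    have h' : ((x.1 : ℝ) + (x.2 : ℝ) * γ : ℝ) = 0 := by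
      rw [← Complex.ofReal_eq_zero]
      rw [← h]; simp only [ev]; push_cast; ring
    obtain ⟨h1, h2⟩ := ev_eq_zero_iff_aux hγ x.1 x.2 h'
    exact Prod.ext h1 h2
  · rintro h; rw [h]; simp [ev]

lemma nonempty_iff_detG {γ : ℝ} (hγr : γ ^ 2 + γ - 1 = 0) (a b c : HIdx) :
    (Hline γ a ∩ Hline γ b ∩ Hline γ c).Nonempty ↔
      detG (coeffs a) (coeffs b) (coeffs c) = (0, 0) := by
  have hγ : ((γ:ℂ)) ^ 2 + (γ:ℂ) - 1 = 0 := by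
    have : (((γ ^ 2 + γ - 1 : ℝ)) : ℂ) = 0 := by rw [hγr]; norm_num
    push_cast at this
    linear_combination this
  rw [Hline_eq, Hline_eq, Hline_eq]
  have key : (plineT γ (coeffs a) ∩ plineT γ (coeffs b) ∩ plineT γ (coeffs c)).Nonempty ↔
      ∃ v ≠ 0, (matC γ (coeffs a) (coeffs b) (coeffs c)) *ᵥ v = 0 := by
    constructor
    · rintro ⟨p, ⟨ha, hb⟩, hc⟩
      refine ⟨p.rep, p.rep_nonzero, ?_⟩
      funext i
      have hmk := Projectivization.mk_rep p
      rw [← hmk] at ha hb hc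
      rw [mem_plineT] at ha hb hc
      fin_cases i
      · simp only [matC, Matrix.mulVec, dotProduct, Fin.sum_univ_three,
          Matrix.of_apply, Matrix.cons_val', Matrix.cons_val_zero, Matrix.cons_val_one,
          Matrix.head_cons, Matrix.empty_val', Matrix.cons_val_fin_one, Matrix.head_fin_const,
          Matrix.cons_val_two, Matrix.tail_cons, Pi.zero_apply, Matrix.cons_val_zero', Matrix.cons_val_succ']
        linear_combination ha
      · simp only [matC, Matrix.mulVec, dotProduct, Fin.sum_univ_three,
          Matrix.of_apply, Matrix.cons_val', Matrix.cons_val_zero, Matrix.cons_val_one,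
          Matrix.head_cons, Matrix.empty_val', Matrix.cons_val_fin_one, Matrix.head_fin_const,
          Matrix.cons_val_two, Matrix.tail_cons, Pi.zero_apply, Matrix.cons_val_zero', Matrix.cons_val_succ']
        linear_combination hb
      · simp only [matC, Matrix.mulVec, dotProduct, Fin.sum_univ_three,
          Matrix.of_apply, Matrix.cons_val', Matrix.cons_val_zero, Matrix.cons_val_one,
          Matrix.head_cons, Matrix.empty_val', Matrix.cons_val_fin_one, Matrix.head_fin_const,
          Matrix.cons_val_two, Matrix.tail_cons, Pi.zero_apply, Matrix.cons_val_zero', Matrix.cons_val_succ']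
        linear_combination hc
    · rintro ⟨v, hv, hMv⟩
      refine ⟨Projectivization.mk ℂ v hv, ⟨?_, ?_⟩, ?_⟩ <;> rw [mem_plineT]
      · have h0 := congrFun hMv 0
        simpa [matC, Matrix.mulVec, dotProduct, Fin.sum_univ_three] using h0
      · have h1 := congrFun hMv 1
        simpa [matC, Matrix.mulVec, dotProduct, Fin.sum_univ_three] using h1
      · have h2 := congrFun hMv 2
        simpa [matC, Matrix.mulVec, dotProduct, Fin.sum_univ_three] using h2
  rw [key, Matrix.exists_mulVec_eq_zero_iff, det_matC hγ]
  exact ev_eq_zero_iff hγr _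

def concB (a b c : HIdx) : Bool := decide (detG (coeffs a) (coeffs b) (coeffs c) = ((0,0) : G2))

lemma concB_iff {γ : ℝ} (hγr : γ ^ 2 + γ - 1 = 0) (a b c : HIdx) :
    (Hline γ a ∩ Hline γ b ∩ Hline γ c).Nonempty ↔ concB a b c = true := by
  rw [nonempty_iff_detG hγr]; simp [concB]

def cntT : HIdx → ℕ
  | some (.inl 0) => 8
  | some (.inl 1) => 10
  | some (.inl 2) => 12
  | some (.inl 3) => 8
  | some (.inl 4) => 12
  | some (.inr 0) => 16
  | some (.inr 1) => 18
  | some (.inr 2) => 16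
  | some (.inr 3) => 20
  | some (.inr 4) => 16
  | none => 8

def cnt2T : HIdx → ℕ
  | some (.inl 0) => 224
  | some (.inl 1) => 268
  | some (.inl 2) => 312
  | some (.inl 3) => 216
  | some (.inl 4) => 312
  | some (.inr 0) => 504
  | some (.inr 1) => 524
  | some (.inr 2) => 496
  | some (.inr 3) => 560
  | some (.inr 4) => 496
  | none => 232

def pset (i : HIdx) : Finset (HIdx × HIdx) :=
  Finset.univ.filter fun p : HIdx × HIdx =>
    (i ≠ p.1 ∧ i ≠ p.2 ∧ p.1 ≠ p.2) ∧ concB i p.1 p.2 = true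

def cnt (i : HIdx) : ℕ := (pset i).card

def cnt2 (i : HIdx) : ℕ := ∑ p ∈ pset i, (cntT p.1 + cntT p.2)

lemma cnt_eq : ∀ i : HIdx, cnt i = cntT i := by decide

lemma cnt2_eq : ∀ i : HIdx, cnt2 i = cnt2T i := by decide

lemma sig_unique : ∀ j k : HIdx, cntT j = cntT k → cnt2T j = cnt2T k →
    j = k ∨ ((j = some (.inl 2) ∧ k = some (.inl 4)) ∨ (j = some (.inl 4) ∧ k = some (.inl 2)) ∨
             (j = some (.inr 2) ∧ k = some (.inr 4)) ∨ (j = some (.inr 4) ∧ k = some (.inr 2))) := by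
  decide

/-- For `γ` a root of `γ² + γ − 1 = 0` (i.e. `γ = (−1±√5)/2`), every permutation `φ` of
the eleven lines of `ℋ_γ` such that any three distinct lines have a common point iff
their `φ`-images have a common point, is the identity: the automorphism group of the
combinatorics `ℋ` is trivial. -/
theorem stmt_14 (γ : ℝ) (hγ : γ ^ 2 + γ - 1 = 0) (φ : Equiv.Perm HIdx)
    (hφ : ∀ a b c : HIdx, a ≠ b → a ≠ c → b ≠ c →
      ((Hline γ a ∩ Hline γ b ∩ Hline γ c).Nonempty ↔
       (Hline γ (φ a) ∩ Hline γ (φ b) ∩ Hline γ (φ c)).Nonempty)) :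
    φ = Equiv.refl HIdx := by
  -- Boolean transfer
  have hB : ∀ a b c : HIdx, a ≠ b → a ≠ c → b ≠ c →
      concB a b c = concB (φ a) (φ b) (φ c) := by
    intro a b c h1 h2 h3
    have h := ((concB_iff hγ a b c).symm.trans ((hφ a b c h1 h2 h3).trans
      (concB_iff hγ (φ a) (φ b) (φ c)))) 
    cases hA : concB a b c <;> cases hC : concB (φ a) (φ b) (φ c) <;> simp_all
  -- invariance of `pset` cardinalities
  have hmem : ∀ (i : HIdx) (p : HIdx × HIdx), p ∈ pset i → (φ p.1, φ p.2) ∈ pset (φ i) := by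
    intro i p hp
    simp only [pset, Finset.mem_filter, Finset.mem_univ, true_and] at hp ⊢
    obtain ⟨⟨d1, d2, d3⟩, hc⟩ := hp
    exact ⟨⟨φ.injective.ne d1, φ.injective.ne d2, φ.injective.ne d3⟩,
      (hB i p.1 p.2 d1 d2 d3) ▸ hc⟩
  have hmem' : ∀ (i : HIdx) (q : HIdx × HIdx), q ∈ pset (φ i) →
      (φ.symm q.1, φ.symm q.2) ∈ pset i := by
    intro i q hq
    simp only [pset, Finset.mem_filter, Finset.mem_univ, true_and] at hq ⊢
    obtain ⟨⟨d1, d2, d3⟩, hc⟩ := hq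
    have e1 : i ≠ φ.symm q.1 := fun h => d1 (by rw [h]; simp)
    have e2 : i ≠ φ.symm q.2 := fun h => d2 (by rw [h]; simp)
    have e3 : φ.symm q.1 ≠ φ.symm q.2 := φ.symm.injective.ne d3
    refine ⟨⟨e1, e2, e3⟩, ?_⟩
    rw [hB i (φ.symm q.1) (φ.symm q.2) e1 e2 e3]
    simpa using hc
  have hcnt : ∀ i : HIdx, cnt (φ i) = cnt i := by
    intro i
    refine (Finset.card_bij' (fun p _ => (φ.symm p.1, φ.symm p.2))
      (fun p _ => (φ p.1, φ p.2)) (fun p hp => hmem' i p hp)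
      (fun p hp => hmem i p hp) (fun p hp => by simp) (fun p hp => by simp))
  have hTT : ∀ i : HIdx, cntT (φ i) = cntT i := by
    intro i; rw [← cnt_eq, ← cnt_eq]; exact hcnt i
  have hcnt2 : ∀ i : HIdx, cnt2 (φ i) = cnt2 i := by
    intro i
    refine (Finset.sum_bij' (fun p _ => (φ.symm p.1, φ.symm p.2))
      (fun p _ => (φ p.1, φ p.2)) (fun p hp => hmem' i p hp)
      (fun p hp => hmem i p hp) (fun p hp => by simp) (fun p hp => by simp) ?_)
    intro p hp
    have a1 := hTT (φ.symm p.1)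
    have a2 := hTT (φ.symm p.2)
    simp only [Equiv.apply_symm_apply] at a1 a2
    rw [a1, a2]
  have hT2 : ∀ i : HIdx, cnt2T (φ i) = cnt2T i := by
    intro i; rw [← cnt2_eq, ← cnt2_eq]; exact hcnt2 i
  -- each line is fixed or swapped within {L3,L5} or {M3,M5}
  have hfix : ∀ i : HIdx, φ i = i ∨
      ((φ i = some (.inl 2) ∧ i = some (.inl 4)) ∨ (φ i = some (.inl 4) ∧ i = some (.inl 2)) ∨
       (φ i = some (.inr 2) ∧ i = some (.inr 4)) ∨ (φ i = some (.inr 4) ∧ i = some (.inr 2))) :=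
    fun i => sig_unique (φ i) i (hTT i) (hT2 i)
  -- pin down L3 and M5 using the concurrent triple (L1, L3, M5)
  have hL1 : φ (some (.inl 0)) = some (.inl 0) := by
    rcases hfix (some (.inl 0)) with h | h <;> simp_all
  have key : concB (some (.inl 0)) (φ (some (.inl 2))) (φ (some (.inr 4))) = true := by
    rw [← hL1, ← hB (some (.inl 0)) (some (.inl 2)) (some (.inr 4)) (by decide) (by decide) (by decide)]
    decide
  have hL3 : φ (some (.inl 2)) = some (.inl 2) := by
    rcases hfix (some (.inl 2)) with h | h
    · exact h
    · exfalso
      have h1 : φ (some (.inl 2)) = some (.inl 4) := by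
        rcases h with ⟨c1, c2⟩ | ⟨c1, c2⟩ | ⟨c1, c2⟩ | ⟨c1, c2⟩ <;>
          first | exact c1 | exact absurd c2 (by decide)
      rcases hfix (some (.inr 4)) with h' | h'
      · rw [h1, h'] at key; exact absurd key (by decide)
      · have h2 : φ (some (.inr 4)) = some (.inr 2) := by
          rcases h' with ⟨c1, c2⟩ | ⟨c1, c2⟩ | ⟨c1, c2⟩ | ⟨c1, c2⟩ <;>
            first | exact c1 | exact absurd c2 (by decide)
        rw [h1, h2] at key; exact absurd key (by decide)
  have hM5 : φ (some (.inr 4)) = some (.inr 4) := by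
    rcases hfix (some (.inr 4)) with h | h
    · exact h
    · exfalso
      have h2 : φ (some (.inr 4)) = some (.inr 2) := by
        rcases h with ⟨c1, c2⟩ | ⟨c1, c2⟩ | ⟨c1, c2⟩ | ⟨c1, c2⟩ <;>
          first | exact c1 | exact absurd c2 (by decide)
      rw [hL3, h2] at key; exact absurd key (by decide)
  have hL5 : φ (some (.inl 4)) = some (.inl 4) := by
    rcases hfix (some (.inl 4)) with h | h
    · exact h
    · exfalso
      rcases h with ⟨h1, h2⟩ | ⟨h1, h2⟩ | ⟨h1, h2⟩ | ⟨h1, h2⟩ <;> try exact absurd h2 (by decide)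
      · exact absurd (φ.injective (h1.trans hL3.symm)) (by decide)
  have hM3 : φ (some (.inr 2)) = some (.inr 2) := by
    rcases hfix (some (.inr 2)) with h | h
    · exact h
    · exfalso
      rcases h with ⟨h1, h2⟩ | ⟨h1, h2⟩ | ⟨h1, h2⟩ | ⟨h1, h2⟩ <;> try exact absurd h2 (by decide)
      · exact absurd (φ.injective (h1.trans hM5.symm)) (by decide)
  apply Equiv.ext
  intro x
  rcases x with _ | (i | i)
  · rcases hfix none with h | h <;> simp_all
  · fin_cases i
    · exact hL1
    · rcases hfix (some (.inl 1)) with h | h <;> simp_all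
    · exact hL3
    · rcases hfix (some (.inl 3)) with h | h <;> simp_all
    · exact hL5
  · fin_cases i
    · rcases hfix (some (.inr 0)) with h | h <;> simp_all
    · rcases hfix (some (.inr 1)) with h | h <;> simp_all
    · exact hM3
    · rcases hfix (some (.inr 3)) with h | h <;> simp_all
    · exact hM5
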